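/- In the king wire gadget with input signal 0 (the input king has budget 0), every normalized capturing sequence outputs a 0-king: no normalized capturing sequence can leave the output king with budget 1. -/

import Mathlib

/-- A configuration assigns to each square an optional budget (`none` = empty). -/
abbrev Config (V : Type) := V → Option ℕ

/-- Apply capture move `(x, y)`: the piece on `x` captures the piece on `y`,
moving to `y` with budget decreased by one. -/
def applyMove {V : Type} [DecidableEq V] (c : Config V) (m : V × V) : Config V :=
  fun z =>
    if z = m.2 then (c m.1).map (· - 1)
    else if z = m.1 then none
    else c z

/-- A move is valid if the squares are adjacent, the source piece has positive
budget, and the target square is occupied. -/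
def ValidMove {V : Type} (adj : V → V → Prop) (c : Config V) (m : V × V) : Prop :=
  adj m.1 m.2 ∧ (∃ b, c m.1 = some (b + 1)) ∧ (c m.2).isSome

def applySeq {V : Type} [DecidableEq V] (c : Config V) : List (V × V) → Config V
  | [] => c
  | m :: s => applySeq (applyMove c m) s

def ValidSeq {V : Type} [DecidableEq V] (adj : V → V → Prop) (c : Config V) :
    List (V × V) → Prop
  | [] => True
  | m :: s => ValidMove adj c m ∧ ValidSeq adj (applyMove c m) s

/-- `ConfigLE c c'`: same pieces on the same squares, with each budget in `c'`
at least the corresponding budget in `c`. -/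
def ConfigLE {V : Type} (c c' : Config V) : Prop :=
  ∀ v, ((c v).isSome ↔ (c' v).isSome) ∧
    ∀ b b', c v = some b → c' v = some b' → b ≤ b'

/-- A clearing sequence: valid and exactly one piece remains. -/
def Clears {V : Type} [DecidableEq V] (adj : V → V → Prop) (c : Config V)
    (s : List (V × V)) : Prop :=
  ValidSeq adj c s ∧ ∃! v, (applySeq c s v).isSome

/-- `f` is the final square of sequence `s` applied to `c`. -/
def FinalSquare {V : Type} [DecidableEq V] (c : Config V) (s : List (V × V)) (f : V) : Prop :=
  (applySeq c s f).isSome ∧ ∀ v, (applySeq c s v).isSome → v = f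

/-- A virtual 0-piece: occupied initially, and never moves during `s`. -/
def Virtual0 {V : Type} (c : Config V) (s : List (V × V)) (v : V) : Prop :=
  (c v).isSome ∧ ∀ m ∈ s, m.1 ≠ v

/-- A virtual 2-piece: occupied initially, and moves at some point during `s`. -/
def Virtual2 {V : Type} (c : Config V) (s : List (V × V)) (v : V) : Prop :=
  (c v).isSome ∧ ∃ m ∈ s, m.1 = v

/-- The capture graph of a configuration: vertices are squares, with an edge
between two occupied squares whose pieces can capture each other. -/
def captureGraph {V : Type} (adj : V → V → Prop) (hs : Symmetric adj) (c : Config V) :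
    SimpleGraph V where
  Adj x y := adj x y ∧ x ≠ y ∧ (c x).isSome ∧ (c y).isSome
  symm := by
    constructor
    intro x y h
    exact ⟨hs h.1, h.2.1.symm, h.2.2.2, h.2.2.1⟩
  loopless := by
    constructor
    intro x h
    exact h.2.1 rfl

/-- King adjacency on the integer board: distinct squares at Chebyshev
distance 1. -/
def kingAdj (p q : ℤ × ℤ) : Prop :=
  p ≠ q ∧ |p.1 - q.1| ≤ 1 ∧ |p.2 - q.2| ≤ 1

/-- The king wire with `k` interior columns and input budget `i`: an input king
of budget `i` at `(0,0)`, columns of two 2-kings at `x = 1, …, k` (rows 0 and 1),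
a connector column of three 2-kings at `x = k+1` (rows -1, 0, 1), and the output
2-king at `(k+2, 0)`. -/
def kingWire (k : ℕ) (i : ℕ) : Config (ℤ × ℤ) := fun p =>
  if p = (0, 0) then some i
  else if 1 ≤ p.1 ∧ p.1 ≤ (k : ℤ) ∧ (p.2 = 0 ∨ p.2 = 1) then some 2
  else if p.1 = (k : ℤ) + 1 ∧ (p.2 = -1 ∨ p.2 = 0 ∨ p.2 = 1) then some 2
  else if p = ((k : ℤ) + 2, 0) then some 2
  else none

/-! ### Auxiliary machinery -/

section Aux

variable {V : Type} [DecidableEq V] {adj : V → V → Prop}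

lemma applySeq_cons (c : Config V) (m : V × V) (s : List (V × V)) :
    applySeq c (m :: s) = applySeq (applyMove c m) s := rfl

lemma validSeq_append {c : Config V} :
    ∀ (s t : List (V × V)), ValidSeq adj c (s ++ t) →
      ValidSeq adj c s ∧ ValidSeq adj (applySeq c s) t := by
  intro s
  induction s generalizing c with
  | nil => intro t h; exact ⟨trivial, h⟩
  | cons m s ih =>
      intro t h
      obtain ⟨h1, h2⟩ := h
      obtain ⟨h3, h4⟩ := ih (c := applyMove c m) t h2
      exact ⟨⟨h1, h3⟩, h4⟩

/-- Empty squares stay empty during a valid sequence. -/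
lemma empty_stays {c : Config V} {q : V} :
    ∀ s : List (V × V), ValidSeq adj c s → c q = none → applySeq c s q = none := by
  intro s
  induction s generalizing c with
  | nil => intro _ h; exact h
  | cons m s ih =>
      intro hv h
      obtain ⟨⟨hadj, ⟨b, hb⟩, ht⟩, hv'⟩ := hv
      apply ih hv'
      have h2 : ¬ q = m.2 := by
        intro h2; rw [← h2, h] at ht; simp at ht
      show applyMove c m q = none
      unfold applyMove
      by_cases h1 : q = m.1
      · rw [if_neg h2, if_pos h1]
      · rw [if_neg h2, if_neg h1]; exact h

/-- A square that is occupied at the end and never a target kept its value. -/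
lemma untouched {c : Config V} {q : V} :
    ∀ s : List (V × V), ValidSeq adj c s → (applySeq c s q).isSome →
      (∀ m ∈ s, m.2 ≠ q) → applySeq c s q = c q := by
  intro s
  induction s generalizing c with
  | nil => intro _ _ _; rfl
  | cons m s ih =>
      intro hv hocc hnt
      obtain ⟨⟨hadj, ⟨b, hb⟩, ht⟩, hv'⟩ := hv
      have h2 : ¬ q = m.2 := fun h => hnt m (by simp) h.symm
      by_cases h1 : q = m.1
      · exfalso
        have hw : applyMove c m q = none := by
          unfold applyMove
          rw [if_neg h2, if_pos h1]
        rw [applySeq_cons] at hocc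
        rw [empty_stays s hv' hw] at hocc
        simp at hocc
      · have hw : applyMove c m q = c q := by
          unfold applyMove
          rw [if_neg h2, if_neg h1]
        rw [applySeq_cons, ih hv' (by rwa [applySeq_cons] at hocc)
          (fun m' hm' => hnt m' (by simp [hm'])), hw]

/-- Sum of captured budgets along a sequence. -/
def capSum (c : Config V) : List (V × V) → ℕ
  | [] => 0
  | m :: s => (c m.2).getD 0 + capSum (applyMove c m) s

/-- Two-point sum comparison. -/
lemma two_point (S : Finset V) (f f' : V → ℕ) (a b : V) (hab : a ≠ b)
    (ha : a ∈ S) (hb : b ∈ S) (hoth : ∀ q, q ≠ a → q ≠ b → f' q = f q) :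
    (∑ q ∈ S, f' q) + f a + f b = (∑ q ∈ S, f q) + f' a + f' b := by
  classical
  have hbe : b ∈ S.erase a := Finset.mem_erase.mpr ⟨hab.symm, hb⟩
  rw [← Finset.add_sum_erase S f' ha, ← Finset.add_sum_erase S f ha,
    ← Finset.add_sum_erase _ f' hbe, ← Finset.add_sum_erase _ f hbe]
  have hc : ∑ q ∈ (S.erase a).erase b, f' q = ∑ q ∈ (S.erase a).erase b, f q := by
    apply Finset.sum_congr rfl
    intro q hq
    have h1 := (Finset.mem_erase.mp hq).1
    have h2 := (Finset.mem_erase.mp (Finset.mem_erase.mp hq).2).1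
    exact hoth q h2 h1
  rw [hc]
  omega

lemma applyMove_closure {c : Config V} {m : V × V} (S : Finset V)
    (hS : ∀ q, (c q).isSome → q ∈ S) (ht : (c m.2).isSome) :
    ∀ q, ((applyMove c m q).isSome → q ∈ S) := by
  intro q h
  by_cases h2 : q = m.2
  · exact h2 ▸ hS m.2 ht
  · by_cases h1 : q = m.1
    · unfold applyMove at h; rw [if_neg h2, if_pos h1] at h; simp at h
    · unfold applyMove at h; rw [if_neg h2, if_neg h1] at h; exact hS q h

variable (hne : ∀ x y : V, adj x y → x ≠ y)

include hne in
/-- The key counting identities over one move. -/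
lemma move_counts {c : Config V} {m : V × V} (hm : ValidMove adj c m) (S : Finset V)
    (hS : ∀ q, (c q).isSome → q ∈ S) :
    ((∑ q ∈ S, (applyMove c m q).getD 0) + 1 + (c m.2).getD 0 = ∑ q ∈ S, (c q).getD 0)
    ∧ ((∑ q ∈ S, if (applyMove c m q).isSome then 1 else 0) + 1
        = ∑ q ∈ S, if (c q).isSome then 1 else 0) := by
  obtain ⟨hadj, ⟨b, hb⟩, ht⟩ := hm
  have hmne : m.1 ≠ m.2 := hne _ _ hadj
  have h1 : m.1 ∈ S := hS m.1 (by simp [hb])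
  have h2 : m.2 ∈ S := hS m.2 ht
  have e1 : applyMove c m m.1 = none := by
    unfold applyMove; rw [if_neg hmne, if_pos rfl]
  have e2 : applyMove c m m.2 = some b := by
    unfold applyMove; rw [if_pos rfl, hb]; rfl
  have eo : ∀ q, q ≠ m.1 → q ≠ m.2 → applyMove c m q = c q := by
    intro q hq1 hq2; unfold applyMove; rw [if_neg hq2, if_neg hq1]
  constructor
  · have := two_point S (fun q => (c q).getD 0) (fun q => (applyMove c m q).getD 0)
      m.1 m.2 hmne h1 h2 (fun q hq1 hq2 => by simp [eo q hq1 hq2])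
    simp only [e1, e2, hb] at this
    simp only [Option.getD_some, Option.getD_none] at this
    omega
  · have := two_point S (fun q => if (c q).isSome then 1 else 0)
      (fun q => if (applyMove c m q).isSome then 1 else 0)
      m.1 m.2 hmne h1 h2 (fun q hq1 hq2 => by simp [eo q hq1 hq2])
    simp only [e1, e2, hb] at this
    simp [ht] at this ⊢
    omega

include hne in
/-- Global counting identities. -/
lemma seq_counts {S : Finset V} :
    ∀ (s : List (V × V)) (c : Config V), ValidSeq adj c s →
      (∀ q, (c q).isSome → q ∈ S) →
      ((∑ q ∈ S, (applySeq c s q).getD 0) + s.length + capSum c s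
          = ∑ q ∈ S, (c q).getD 0)
      ∧ ((∑ q ∈ S, if (applySeq c s q).isSome then 1 else 0) + s.length
          = ∑ q ∈ S, if (c q).isSome then 1 else 0) := by
  intro s
  induction s with
  | nil => intro c _ _; refine ⟨?_, ?_⟩ <;> simp only [applySeq, capSum, List.length_nil, add_zero] <;> rfl
  | cons m s ih =>
      intro c hv hS
      obtain ⟨hm, hv'⟩ := hv
      obtain ⟨mc1, mc2⟩ := move_counts hne hm S hS
      obtain ⟨ic1, ic2⟩ := ih (applyMove c m) hv' (applyMove_closure S hS hm.2.2)
      constructor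
      · rw [applySeq_cons]
        show _ + (s.length + 1) + ((c m.2).getD 0 + capSum (applyMove c m) s) = _
        omega
      · rw [applySeq_cons]
        show _ + (s.length + 1) = _
        omega

end Aux

/-- First occurrence extraction. -/
lemma first_split {α : Type} (p : α → Prop) [DecidablePred p] :
    ∀ s : List α, (∃ m ∈ s, p m) →
      ∃ s₁ m s₂, s = s₁ ++ m :: s₂ ∧ p m ∧ ∀ m' ∈ s₁, ¬ p m' := by
  intro s
  induction s with
  | nil => rintro ⟨m, hm, _⟩; simp at hm
  | cons a t ih =>
      intro h
      by_cases hpa : p a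
      · exact ⟨[], a, t, by simp, hpa, by simp⟩
      · obtain ⟨m, hm, hpm⟩ := h
        rcases List.mem_cons.mp hm with h | h
        · exact absurd (h ▸ hpm) hpa
        · obtain ⟨s₁, m', s₂, he, hp, hfst⟩ := ih ⟨m, h, hpm⟩
          exact ⟨a :: s₁, m', s₂, by simp [he], hp, by
            intro m' hm'
            rcases List.mem_cons.mp hm' with h | h
            · exact h ▸ hpa
            · exact hfst m' h⟩

/-- If no move ever targets column `j`, an occupied square left of `j` persists. -/
lemma cut_persist (j : ℤ) :
    ∀ (s : List ((ℤ × ℤ) × (ℤ × ℤ))) (c : Config (ℤ × ℤ)), ValidSeq kingAdj c s →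
      (∀ m ∈ s, m.2.1 ≠ j) → (∃ p : ℤ × ℤ, p.1 < j ∧ (c p).isSome) →
      ∃ p : ℤ × ℤ, p.1 < j ∧ (applySeq c s p).isSome := by
  intro s
  induction s with
  | nil => intro c _ _ h; exact h
  | cons m t ih =>
      intro c hv hnt hex
      obtain ⟨⟨⟨hneq, hx, hy⟩, ⟨b, hb⟩, ht⟩, hv'⟩ := hv
      rw [applySeq_cons]
      have habs := abs_le.mp hx
      have htne : m.2.1 ≠ j := hnt m (by simp)
      by_cases hsrc : m.1.1 < j
      · apply ih (applyMove c m) hv' (fun m' hm' => hnt m' (by simp [hm']))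
        refine ⟨m.2, by omega, ?_⟩
        unfold applyMove
        simp [hb]
      · obtain ⟨p, hp, hocc⟩ := hex
        apply ih (applyMove c m) hv' (fun m' hm' => hnt m' (by simp [hm']))
        refine ⟨p, hp, ?_⟩
        unfold applyMove
        by_cases hp2 : p = m.2
        · simp [hp2, hb]
        · have hp1 : p ≠ m.1 := by
            intro h; rw [h] at hp; omega
          simp [hp1, hp2, hocc]

/-! ### Wire-specific facts -/

/-- The support of the king wire. -/
noncomputable def wireSupp (k : ℕ) : Finset (ℤ × ℤ) :=
  (Finset.Icc (1 : ℤ) (k : ℤ)) ×ˢ ({0, 1} : Finset ℤ) ∪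
    {((0 : ℤ), (0 : ℤ)), ((k : ℤ) + 1, -1), ((k : ℤ) + 1, 0), ((k : ℤ) + 1, 1),
      ((k : ℤ) + 2, 0)}

lemma wire_eval_interior (k : ℕ) {x y : ℤ} (h1 : 1 ≤ x) (h2 : x ≤ (k : ℤ))
    (h3 : y = 0 ∨ y = 1) : kingWire k 0 (x, y) = some 2 := by
  unfold kingWire
  rw [if_neg (by simp [Prod.ext_iff] <;> omega), if_pos (by simp; exact ⟨h1, h2, h3⟩)]

lemma wire_eval_conn (k : ℕ) {y : ℤ} (h3 : y = -1 ∨ y = 0 ∨ y = 1) :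
    kingWire k 0 ((k : ℤ) + 1, y) = some 2 := by
  unfold kingWire
  rw [if_neg (by simp [Prod.ext_iff] <;> omega), if_neg (by simp <;> omega),
    if_pos (by simp [h3])]

lemma wire_eval_out (k : ℕ) : kingWire k 0 ((k : ℤ) + 2, 0) = some 2 := by
  unfold kingWire
  rw [if_neg (by simp [Prod.ext_iff] <;> omega), if_neg (by simp <;> omega),
    if_neg (by simp <;> omega), if_pos rfl]

lemma wire_supp_mem (k : ℕ) : ∀ q, (kingWire k 0 q).isSome → q ∈ wireSupp k := by
  intro q h
  unfold kingWire at h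
  unfold wireSupp
  split_ifs at h with c1 c2 c3 c4
  · subst c1; simp
  · obtain ⟨h1, h2, h3⟩ := c2
    apply Finset.mem_union_left
    rw [Finset.mem_product]
    constructor
    · rw [Finset.mem_Icc]; exact ⟨h1, h2⟩
    · simpa using h3
  · apply Finset.mem_union_right
    obtain ⟨h1, h2⟩ := c3
    have : q = ((k : ℤ) + 1, q.2) := by rw [← h1]
    rw [this]
    rcases h2 with h | h | h <;> rw [h] <;> simp
  · apply Finset.mem_union_right
    rw [c4]; simp
  · simp at h

lemma wire_supp_val (k : ℕ) : ∀ q : ℤ × ℤ, (kingWire k 0 q).isSome → 1 ≤ q.1 →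
    kingWire k 0 q = some 2 := by
  intro q h hq
  unfold kingWire at h ⊢
  split_ifs at h ⊢ with c1 c2 c3 c4
  · exfalso; rw [c1] at hq; simp at hq
  · rfl
  · rfl
  · rfl
  · simp at h

/-- Sum of any values over the wire support. -/
lemma wire_sum (k : ℕ) (g : Option ℕ → ℕ) (hg : g none = 0) :
    ∑ q ∈ wireSupp k, g (kingWire k 0 q) = g (some 0) + (2 * k + 4) * g (some 2) := by
  unfold wireSupp
  have hknn : (0 : ℤ) ≤ (k : ℤ) := Int.natCast_nonneg k
  rw [Finset.sum_union]
  · have h1 : ∑ q ∈ (Finset.Icc (1 : ℤ) (k : ℤ)) ×ˢ ({0, 1} : Finset ℤ),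
        g (kingWire k 0 q) = 2 * k * g (some 2) := by
      rw [Finset.sum_product]
      have : ∀ x ∈ Finset.Icc (1 : ℤ) (k : ℤ),
          ∑ y ∈ ({0, 1} : Finset ℤ), g (kingWire k 0 (x, y)) = 2 * g (some 2) := by
        intro x hx
        rw [Finset.mem_Icc] at hx
        rw [Finset.sum_insert (by simp), Finset.sum_singleton,
          wire_eval_interior k hx.1 hx.2 (Or.inl rfl),
          wire_eval_interior k hx.1 hx.2 (Or.inr rfl)]
        ring
      rw [Finset.sum_congr rfl this, Finset.sum_const, Int.card_Icc]
      have : ((k : ℤ) + 1 - 1).toNat = k := by omega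
      rw [this]; ring
    rw [h1]
    have h2 : ∑ q ∈ ({((0 : ℤ), (0 : ℤ)), ((k : ℤ) + 1, -1), ((k : ℤ) + 1, 0),
        ((k : ℤ) + 1, 1), ((k : ℤ) + 2, 0)} : Finset (ℤ × ℤ)),
        g (kingWire k 0 q) = g (some 0) + 4 * g (some 2) := by
      rw [Finset.sum_insert (by simp [Prod.ext_iff] <;> omega),
        Finset.sum_insert (by simp [Prod.ext_iff] <;> omega),
        Finset.sum_insert (by simp [Prod.ext_iff] <;> omega),
        Finset.sum_insert (by simp [Prod.ext_iff] <;> omega),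
        Finset.sum_singleton]
      have e0 : kingWire k 0 ((0 : ℤ), (0 : ℤ)) = some 0 := by
        unfold kingWire; rw [if_pos rfl]
      rw [e0, wire_eval_conn k (Or.inl rfl), wire_eval_conn k (Or.inr (Or.inl rfl)),
        wire_eval_conn k (Or.inr (Or.inr rfl)), wire_eval_out k]
      ring
    rw [h2]; ring
  · rw [Finset.disjoint_left]
    intro a ha hb
    rw [Finset.mem_product, Finset.mem_Icc] at ha
    simp only [Finset.mem_insert, Finset.mem_singleton, Prod.ext_iff] at hb
    obtain ⟨⟨ha1, ha2⟩, _⟩ := ha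
    rcases hb with h | h | h | h | h <;> omega

/-- The first move targeting column `j` captures a budget-2 king. -/
def QCol (c : Config (ℤ × ℤ)) (s : List ((ℤ × ℤ) × (ℤ × ℤ))) (j : ℤ) : Prop :=
  ∃ s₁ m s₂, s = s₁ ++ m :: s₂ ∧ m.2.1 = j ∧ (∀ m' ∈ s₁, m'.2.1 ≠ j) ∧
    applySeq c s₁ m.2 = some 2

lemma capSum_lb :
    ∀ (s : List ((ℤ × ℤ) × (ℤ × ℤ))) (c : Config (ℤ × ℤ)) (J : Finset ℤ),
      (∀ j ∈ J, QCol c s j) → 2 * J.card ≤ capSum c s := by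
  intro s
  induction s with
  | nil =>
      intro c J hJ
      rcases Finset.eq_empty_or_nonempty J with h | ⟨j, hj⟩
      · simp [h, capSum]
      · obtain ⟨s₁, m, s₂, he, _⟩ := hJ j hj
        exact absurd he (by simp)
  | cons m₀ t ih =>
      intro c J hJ
      have htail : ∀ j ∈ J.erase m₀.2.1, QCol (applyMove c m₀) t j := by
        intro j hj
        obtain ⟨hjne, hjJ⟩ := Finset.mem_erase.mp hj
        obtain ⟨s₁, m, s₂, he, hcol, hfst, hval⟩ := hJ j hjJ
        cases s₁ with
        | nil =>
            simp at he
            rw [he.1] at hjne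
            exact absurd hcol (Ne.symm hjne)
        | cons a s₁' =>
            rw [List.cons_append] at he
            injection he with ha ht
            refine ⟨s₁', m, s₂, ht, hcol, fun m' hm' => hfst m' (by simp [hm']), ?_⟩
            rw [← ha] at hval
            rwa [applySeq_cons] at hval
      have hih := ih (applyMove c m₀) _ htail
      by_cases hin : m₀.2.1 ∈ J
      · obtain ⟨s₁, m, s₂, he, hcol, hfst, hval⟩ := hJ _ hin
        have hhead : c m₀.2 = some 2 := by
          cases s₁ with
          | nil =>
              simp at he
              rw [he.1]
              exact hval
          | cons a s₁' =>
              rw [List.cons_append] at he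
              injection he with ha ht
              exact absurd rfl (hfst m₀ (by rw [ha]; exact List.mem_cons_self))
        have hc : J.card = (J.erase m₀.2.1).card + 1 := by
          rw [Finset.card_erase_of_mem hin]
          have := Finset.card_pos.mpr ⟨_, hin⟩
          omega
        show 2 * J.card ≤ (c m₀.2).getD 0 + capSum (applyMove c m₀) t
        rw [hhead, hc]
        simp only [Option.getD_some]
        omega
      · rw [Finset.erase_eq_of_notMem hin] at htail
        have := ih (applyMove c m₀) J htail
        show 2 * J.card ≤ (c m₀.2).getD 0 + capSum (applyMove c m₀) t
        omega

/-- **The king wire with input 0 outputs 0.** Every normalized capturing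
sequence of the king wire (one clearing everything except the output square)
with input budget 0 leaves a king of budget 0 on the output square. -/
theorem king_wire_zero_input (k : ℕ) (hk : 1 ≤ k)
    (s : List ((ℤ × ℤ) × (ℤ × ℤ)))
    (hvalid : ValidSeq kingAdj (kingWire k 0) s)
    (hnorm : ∀ p : ℤ × ℤ, p ≠ ((k : ℤ) + 2, 0) → applySeq (kingWire k 0) s p = none)
    (hout : (applySeq (kingWire k 0) s ((k : ℤ) + 2, 0)).isSome) :
    applySeq (kingWire k 0) s ((k : ℤ) + 2, 0) = some 0 := by

  have hne : ∀ x y : ℤ × ℤ, kingAdj x y → x ≠ y := fun x y h => h.1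
  have hS := wire_supp_mem k
  obtain ⟨hT, hN⟩ := seq_counts (S := wireSupp k) hne s (kingWire k 0) hvalid hS
  obtain ⟨b, hb⟩ := Option.isSome_iff_exists.mp hout
  have houtS : ((k : ℤ) + 2, (0 : ℤ)) ∈ wireSupp k := by
    unfold wireSupp
    apply Finset.mem_union_right
    simp
  -- initial sums
  have hT0 : ∑ q ∈ wireSupp k, (kingWire k 0 q).getD 0 = 4 * k + 8 := by
    have := wire_sum k (fun o => o.getD 0) rfl
    simp only [Option.getD_some] at this
    rw [this]; ring
  have hN0 : (∑ q ∈ wireSupp k, if (kingWire k 0 q).isSome then 1 else 0) = 2 * k + 5 := by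
    have := wire_sum k (fun o => if o.isSome then 1 else 0) rfl
    simp only [Option.isSome_some, if_true] at this
    rw [this]; ring
  -- final sums
  have hTend : ∑ q ∈ wireSupp k, (applySeq (kingWire k 0) s q).getD 0 = b := by
    rw [Finset.sum_eq_single_of_mem _ houtS
      (fun q _ hq => by rw [hnorm q hq]; rfl), hb]
    rfl
  have hNend : (∑ q ∈ wireSupp k,
      if (applySeq (kingWire k 0) s q).isSome then 1 else 0) = 1 := by
    rw [Finset.sum_eq_single_of_mem _ houtS
      (fun q _ hq => by rw [hnorm q hq]; rfl), hb]
    rfl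
  -- each column in [1, k+2] has a budget-2 capture
  have hQ : ∀ j ∈ Finset.Icc (1 : ℤ) ((k : ℤ) + 2), QCol (kingWire k 0) s j := by
    intro j hj
    rw [Finset.mem_Icc] at hj
    have hex : ∃ m ∈ s, m.2.1 = j := by
      by_contra h
      push_neg at h
      obtain ⟨p, hp, hocc⟩ := cut_persist j s (kingWire k 0) hvalid h
        ⟨((0 : ℤ), (0 : ℤ)), by show (0 : ℤ) < j; omega, by
          unfold kingWire; rw [if_pos rfl]; rfl⟩
      rw [hnorm p (by intro hpe; rw [hpe] at hp; simp at hp; omega)] at hocc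
      simp at hocc
    obtain ⟨s₁, m, s₂, he, hcol, hfst⟩ := first_split (fun m => m.2.1 = j) s hex
    refine ⟨s₁, m, s₂, he, hcol, hfst, ?_⟩
    rw [he] at hvalid
    obtain ⟨hv₁, hv₂⟩ := validSeq_append s₁ (m :: s₂) hvalid
    have hvm : ValidMove kingAdj (applySeq (kingWire k 0) s₁) m := hv₂.1
    have hocc := hvm.2.2
    have huq : ∀ m' ∈ s₁, m'.2 ≠ m.2 := fun m' hm' heq => hfst m' hm' (by
      show m'.2.1 = j
      rw [heq, hcol])
    have hun := untouched (adj := kingAdj) s₁ hv₁ hocc huq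
    rw [hun] at hocc ⊢
    exact wire_supp_val k m.2 hocc (by rw [hcol]; exact hj.1)
  have hcard : (Finset.Icc (1 : ℤ) ((k : ℤ) + 2)).card = k + 2 := by
    rw [Int.card_Icc]
    omega
  have hW : 2 * (k + 2) ≤ capSum (kingWire k 0) s := by
    have := capSum_lb s (kingWire k 0) _ hQ
    rwa [hcard] at this
  rw [hTend] at hT
  rw [hNend] at hN
  rw [hT0] at hT
  rw [hN0] at hN
  rw [hb]
  have : b = 0 := by omega
  rw [this]
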